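/- In the associative K-algebra A generated by x, y subject to the q-Serre relations, for every positive integer r the higher order q-Serre relation holds: ∑_{i=0}^{2r+1} (−1)^i [2r+1 choose i]_q · x^i y^r x^{2r+1−i} = 0, where [n choose i]_q denotes the q-binomial coefficient [n]!/([i]![n−i]!) with [n] = (qⁿ−q⁻ⁿ)/(q−q⁻¹). -/

import Mathlib

noncomputable section

/-- The generator `x` of the free algebra on two generators. -/
def Xf (K : Type) [Field K] : FreeAlgebra K (Fin 2) := FreeAlgebra.ι K 0

/-- The generator `y` of the free algebra on two generators. -/
def Yf (K : Type) [Field K] : FreeAlgebra K (Fin 2) := FreeAlgebra.ι K 1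

/-- The quantum integer `[3] = (q³−q⁻³)/(q−q⁻¹)`. -/
def qthree {K : Type} [Field K] (q : K) : K := (q ^ 3 - q⁻¹ ^ 3) / (q - q⁻¹)

/-- The `q`-Serre relations on the free algebra on `x, y`. -/
inductive QSerreRel (K : Type) [Field K] (q : K) :
    FreeAlgebra K (Fin 2) → FreeAlgebra K (Fin 2) → Prop
  | xrel : QSerreRel K q
      (Xf K ^ 3 * Yf K - qthree q • (Xf K ^ 2 * Yf K * Xf K)
        + qthree q • (Xf K * Yf K * Xf K ^ 2) - Yf K * Xf K ^ 3) 0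
  | yrel : QSerreRel K q
      (Yf K ^ 3 * Xf K - qthree q • (Yf K ^ 2 * Xf K * Yf K)
        + qthree q • (Yf K * Xf K * Yf K ^ 2) - Xf K * Yf K ^ 3) 0

/-- The algebra `𝒜` generated by `x, y` subject to the `q`-Serre relations
(the positive part of `U_q(ŝl₂)`). -/
abbrev QSerreAlg (K : Type) [Field K] (q : K) := RingQuot (QSerreRel K q)

/-- The generator `x` of `𝒜`. -/
def Xq (K : Type) [Field K] (q : K) : QSerreAlg K q :=
  RingQuot.mkAlgHom K (QSerreRel K q) (Xf K)

/-- The generator `y` of `𝒜`. -/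
def Yq (K : Type) [Field K] (q : K) : QSerreAlg K q :=
  RingQuot.mkAlgHom K (QSerreRel K q) (Yf K)

/-- A word in the letters `x, y` (`true` = `x`, `false` = `y`), as an element of `𝒜`. -/
def wordA {K : Type} [Field K] (q : K) (w : List Bool) : QSerreAlg K q :=
  (w.map (fun b => if b then Xq K q else Yq K q)).prod

/-- The height of a word: (number of `x`'s) − (number of `y`'s). -/
def wheight (w : List Bool) : ℤ := (w.count true : ℤ) - (w.count false : ℤ)

/-- A word is balanced whenever its height is `0`. -/
def BalancedW (w : List Bool) : Prop := wheight w = 0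

/-- A word is height-symmetric whenever its height vector `(h₀,…,h_n)`,
`h_i` = height of the suffix starting at position `i`, satisfies `h_i = h_{n−i}`. -/
def HeightSym (w : List Bool) : Prop :=
  ∀ i ≤ w.length, wheight (w.drop i) = wheight (w.drop (w.length - i))

/-- A word is nil whenever some entry of its height vector is negative. -/
def NilWord (w : List Bool) : Prop := ∃ i, wheight (w.drop i) < 0

/-- `𝓑`, the span of the balanced words in `𝒜`. -/
def Bbal (K : Type) [Field K] (q : K) : Submodule K (QSerreAlg K q) :=
  Submodule.span K {a | ∃ w : List Bool, BalancedW w ∧ a = wordA q w}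

/-- `𝓑^sym`, the span of the height-symmetric words in `𝒜`. -/
def Bsym (K : Type) [Field K] (q : K) : Submodule K (QSerreAlg K q) :=
  Submodule.span K {a | ∃ w : List Bool, HeightSym w ∧ a = wordA q w}

/-- `𝓑^nil`, the span of the nil balanced words in `𝒜`. -/
def Bnil (K : Type) [Field K] (q : K) : Submodule K (QSerreAlg K q) :=
  Submodule.span K {a | ∃ w : List Bool, BalancedW w ∧ NilWord w ∧ a = wordA q w}

/-- The quantum integer `[n] = (qⁿ−q⁻ⁿ)/(q−q⁻¹)`. -/
def qnum {K : Type} [Field K] (q : K) (n : ℕ) : K := (q ^ n - q⁻¹ ^ n) / (q - q⁻¹)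

/-- The quantum factorial `[n]! = [n][n−1]⋯[1]`. -/
def qfact {K : Type} [Field K] (q : K) : ℕ → K
  | 0 => 1
  | n + 1 => qnum q (n + 1) * qfact q n

/-- The quantum binomial coefficient `[n choose i] = [n]!/([i]![n−i]!)`. -/
def qbinom {K : Type} [Field K] (q : K) (n i : ℕ) : K :=
  qfact q n / (qfact q i * qfact q (n - i))

namespace S2

open Polynomial

section Qarith

variable {K : Type} [Field K] {q : K} (hq : q ≠ 0) (hroot : ∀ n : ℕ, 0 < n → q ^ n ≠ 1)

include hq hroot


lemma hden : q - q⁻¹ ≠ 0 := by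
  intro h
  have h2 : q ^ 2 = 1 := by
    field_simp at h
    rw [sq]
    linear_combination h
  exact hroot 2 (by norm_num) h2

lemma qnum_ne {n : ℕ} (hn : 0 < n) : qnum q n ≠ 0 := by
  have hnum : q ^ n - q⁻¹ ^ n ≠ 0 := by
    intro h
    have : q ^ n * q ^ n = q ^ n * q⁻¹ ^ n := by rw [sub_eq_zero] at h; rw [← h]
    have h2 : q ^ (2 * n) = 1 := by
      rw [two_mul, pow_add, this, ← mul_pow, mul_inv_cancel₀ hq, one_pow]
    exact hroot (2 * n) (by omega) h2
  exact div_ne_zero hnum (hden hq hroot)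

lemma qfact_ne (n : ℕ) : qfact q n ≠ 0 := by
  induction n with
  | zero => simp [qfact]
  | succ n ih => exact mul_ne_zero (qnum_ne hq hroot (Nat.succ_pos n)) ih

lemma qnum_one : qnum q 1 = 1 := by
  rw [qnum, pow_one, pow_one, div_self (hden hq hroot)]

lemma qnum_add (i j : ℕ) : qnum q (i + j) = q⁻¹ ^ i * qnum q j + q ^ j * qnum q i := by
  rw [qnum, qnum, qnum, ← mul_div_assoc, ← mul_div_assoc, ← add_div]
  congr 1
  rw [pow_add]
  have : q⁻¹ ^ i * q ^ i = 1 := by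
    rw [← mul_pow, inv_mul_cancel₀ hq, one_pow]
  ring

lemma qbinom_mul (n i : ℕ) : qbinom q n i * (qfact q i * qfact q (n - i)) = qfact q n := by
  rw [qbinom, div_mul_cancel₀]
  exact mul_ne_zero (qfact_ne hq hroot i) (qfact_ne hq hroot (n - i))

lemma qbinom_zero (n : ℕ) : qbinom q n 0 = 1 := by
  rw [qbinom, Nat.sub_zero]
  simp [qfact, div_self (qfact_ne hq hroot n)]

lemma qbinom_self (n : ℕ) : qbinom q n n = 1 := by
  rw [qbinom, Nat.sub_self]
  simp [qfact, div_self (qfact_ne hq hroot n)]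

lemma qbinom_pascal {n i : ℕ} (h : i + 1 ≤ n) :
    qbinom q (n + 1) (i + 1) = q⁻¹ ^ (i + 1) * qbinom q n (i + 1) + q ^ (n - i) * qbinom q n i := by
  have h1 : qfact q (i + 1) * qfact q (n + 1 - (i + 1)) ≠ 0 :=
    mul_ne_zero (qfact_ne hq hroot _) (qfact_ne hq hroot _)
  apply mul_right_cancel₀ h1
  rw [qbinom_mul hq hroot]
  have e1 : n + 1 - (i + 1) = n - i := by omega
  have e2 : qfact q (n - i) = qnum q (n - i) * qfact q (n - i - 1) := by
    have : n - i = (n - i - 1) + 1 := by omega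
    rw [this]; rfl
  have e3 : qfact q (i + 1) = qnum q (i + 1) * qfact q i := rfl
  have e4 : n - (i + 1) = n - i - 1 := by omega
  have key : qfact q (n + 1) = (q⁻¹ ^ (i + 1) * qnum q (n - i) + q ^ (n - i) * qnum q (i + 1)) * qfact q n := by
    have : qfact q (n + 1) = qnum q (n + 1) * qfact q n := rfl
    rw [this]
    congr 1
    have : n + 1 = (i + 1) + (n - i) := by omega
    rw [this, qnum_add hq hroot]
  have m1 := qbinom_mul hq hroot n (i + 1)
  have m2 := qbinom_mul hq hroot n i
  rw [e3, e4] at m1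
  rw [e2] at m2
  rw [key, e1, e2, e3]
  linear_combination (-(q⁻¹ ^ (i + 1) * qnum q (n - i))) * m1 + (-(q ^ (n - i) * qnum q (i + 1))) * m2


lemma qbt (n : ℕ) (R : Type) [CommRing R] [Algebra K R] (u v : R) :
    ∏ i ∈ Finset.range n, (v - (q ^ (2 * (i : ℤ) - (n : ℤ) + 1)) • u)
      = ∑ i ∈ Finset.range (n + 1), ((-1 : K) ^ i * qbinom q n i) • (u ^ i * v ^ (n - i)) := by
  induction n generalizing u with
  | zero => simp [qbinom_zero hq hroot 0]
  | succ n IH =>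
    have hexp : ∀ i : ℕ, (2 * (i : ℤ) - ((n : ℤ) + 1) + 1) = 2 * (i : ℤ) - (n : ℤ) := by
      intro i; ring
    have hprod : ∏ i ∈ Finset.range (n + 1), (v - (q ^ (2 * (i : ℤ) - ((n + 1 : ℕ) : ℤ) + 1)) • u)
        = (∏ i ∈ Finset.range n, (v - (q ^ (2 * (i : ℤ) - (n : ℤ) + 1)) • (q⁻¹ • u)))
          * (v - (q ^ n : K) • u) := by
      rw [Finset.prod_range_succ]
      congr 1
      · apply Finset.prod_congr rfl
        intro i _
        congr 1
        rw [smul_smul]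
        congr 1
        rw [← zpow_neg_one q, ← zpow_add₀ hq]
        congr 1
        push_cast
        ring
      · congr 1
        rw [← zpow_natCast q n]
        congr 1
        push_cast
        ring
    rw [hprod, IH (q⁻¹ • u)]
    have hsplit : (∑ i ∈ Finset.range (n + 1), ((-1 : K) ^ i * qbinom q n i) • ((q⁻¹ • u) ^ i * v ^ (n - i)))
          * (v - (q ^ n : K) • u)
        = (∑ i ∈ Finset.range (n + 1),
            ((-1 : K) ^ i * qbinom q n i * q⁻¹ ^ i) • (u ^ i * v ^ (n + 1 - i)))
          - ∑ i ∈ Finset.range (n + 1),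
            ((-1 : K) ^ i * qbinom q n i * q ^ (n - i)) • (u ^ (i + 1) * v ^ (n - i)) := by
      rw [mul_sub, Finset.sum_mul, Finset.sum_mul, ← Finset.sum_sub_distrib,
        ← Finset.sum_sub_distrib]
      apply Finset.sum_congr rfl
      intro i hi
      rw [Finset.mem_range] at hi
      have hin : i ≤ n := by omega
      rw [_root_.smul_pow]
      have h1 : ((-1 : K) ^ i * qbinom q n i) • ((q⁻¹ ^ i) • u ^ i * v ^ (n - i)) * v
          = ((-1 : K) ^ i * qbinom q n i * q⁻¹ ^ i) • (u ^ i * v ^ (n + 1 - i)) := by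
        rw [show n + 1 - i = (n - i) + 1 from by omega]
        simp only [Algebra.smul_def, map_mul]
        ring
      have h2 : ((-1 : K) ^ i * qbinom q n i) • ((q⁻¹ ^ i) • u ^ i * v ^ (n - i)) * ((q ^ n : K) • u)
          = ((-1 : K) ^ i * qbinom q n i * q ^ (n - i)) • (u ^ (i + 1) * v ^ (n - i)) := by
        have hc : (q⁻¹ : K) ^ i * q ^ n = q ^ (n - i) := by
          rw [show n = (n - i) + i from by omega, pow_add]
          rw [mul_comm (q ^ (n - i)), ← mul_assoc, ← mul_pow, inv_mul_cancel₀ hq, one_pow, one_mul, Nat.add_sub_cancel]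
        rw [← hc]
        simp only [Algebra.smul_def, map_mul]
        ring
      rw [h1, h2]
    rw [hsplit]
    -- now reindex and apply pascal
    rw [Finset.sum_range_succ' (fun i => ((-1 : K) ^ i * qbinom q n i * q⁻¹ ^ i) • (u ^ i * v ^ (n + 1 - i))) n]
    rw [Finset.sum_range_succ (fun i => ((-1 : K) ^ i * qbinom q n i * q ^ (n - i)) • (u ^ (i + 1) * v ^ (n - i))) n]
    rw [Finset.sum_range_succ' (fun i => ((-1 : K) ^ i * qbinom q (n + 1) i) • (u ^ i * v ^ (n + 1 - i))) (n + 1)]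
    rw [Finset.sum_range_succ (fun i => ((-1 : K) ^ (i + 1) * qbinom q (n + 1) (i + 1)) • (u ^ (i + 1) * v ^ (n + 1 - (i + 1)))) n]
    have e0 : ((-1 : K) ^ 0 * qbinom q n 0 * q⁻¹ ^ 0) • (u ^ 0 * v ^ (n + 1 - 0))
        = ((-1 : K) ^ 0 * qbinom q (n + 1) 0) • (u ^ 0 * v ^ (n + 1 - 0)) := by
      rw [qbinom_zero hq hroot, qbinom_zero hq hroot]
      norm_num
    have etop : ((-1 : K) ^ n * qbinom q n n * q ^ (n - n)) • (u ^ (n + 1) * v ^ (n - n))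
        = -(((-1 : K) ^ (n + 1) * qbinom q (n + 1) (n + 1)) • (u ^ (n + 1) * v ^ (n + 1 - (n + 1)))) := by
      rw [qbinom_self hq hroot, qbinom_self hq hroot, Nat.sub_self, Nat.sub_self, ← neg_smul]
      congr 1
      rw [pow_succ]
      ring
    have emid : ∀ i ∈ Finset.range n,
        ((-1 : K) ^ (i + 1) * qbinom q n (i + 1) * q⁻¹ ^ (i + 1)) • (u ^ (i + 1) * v ^ (n + 1 - (i + 1)))
          - ((-1 : K) ^ i * qbinom q n i * q ^ (n - i)) • (u ^ (i + 1) * v ^ (n - i))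
        = ((-1 : K) ^ (i + 1) * qbinom q (n + 1) (i + 1)) • (u ^ (i + 1) * v ^ (n + 1 - (i + 1))) := by
      intro i hi
      rw [Finset.mem_range] at hi
      have hn1 : n + 1 - (i + 1) = n - i := by omega
      rw [hn1, ← sub_smul]
      congr 1
      rw [qbinom_pascal hq hroot (by omega : i + 1 ≤ n)]
      ring
    have hmid : (∑ k ∈ Finset.range n,
          ((-1 : K) ^ (k + 1) * qbinom q n (k + 1) * q⁻¹ ^ (k + 1)) • (u ^ (k + 1) * v ^ (n + 1 - (k + 1))))
        - ∑ k ∈ Finset.range n,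
          ((-1 : K) ^ k * qbinom q n k * q ^ (n - k)) • (u ^ (k + 1) * v ^ (n - k))
        = ∑ k ∈ Finset.range n,
          ((-1 : K) ^ (k + 1) * qbinom q (n + 1) (k + 1)) • (u ^ (k + 1) * v ^ (n + 1 - (k + 1))) := by
      rw [← Finset.sum_sub_distrib]
      exact Finset.sum_congr rfl emid
    rw [e0, etop]
    linear_combination hmid

end Qarith

section Main

variable {K : Type} [Field K] (q : K)


variable {K : Type} [Field K] (q : K)

/-- `P₁ = ∏ (m - q^{2k-2} a)` in `K[a][m]`. -/
def P1 : Polynomial (Polynomial K) :=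
  ∏ k ∈ Finset.range 3, (X - C ((q ^ (2 * (k : ℤ) - 2)) • (X : Polynomial K)))

/-- `P₂ = ∏ (b - q^{2i-2r} m)` in `K[a][m][b]`. -/
def P2 (r : ℕ) : Polynomial (Polynomial (Polynomial K)) :=
  ∏ i ∈ Finset.range (2 * r + 1),
    (X - C ((q ^ (2 * (i : ℤ) - 2 * (r : ℤ))) • (X : Polynomial (Polynomial K))))

/-- `F = ∏ (b - q^{2i-2r-2} a)` in `K[a][m][b]`. -/
def FF (r : ℕ) : Polynomial (Polynomial (Polynomial K)) :=
  ∏ i ∈ Finset.range (2 * r + 3),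
    (X - C (C ((q ^ (2 * (i : ℤ) - 2 * (r : ℤ) - 2)) • (X : Polynomial K))))

lemma P1_eq (hq : q ≠ 0) (hroot : ∀ n : ℕ, 0 < n → q ^ n ≠ 1) : P1 q = ∑ k ∈ Finset.range 4,
    ((-1 : K) ^ k * qbinom q 3 k) • ((C (X : Polynomial K)) ^ k * (X : Polynomial (Polynomial K)) ^ (3 - k)) := by
  have h := qbt hq hroot 3 (Polynomial (Polynomial K)) (C (X : Polynomial K)) X
  rw [← h, P1]
  apply Finset.prod_congr rfl
  intro k _
  congr 1
  rw [Polynomial.smul_C]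
  congr 2
  push_cast
  ring

lemma P2_eq (hq : q ≠ 0) (hroot : ∀ n : ℕ, 0 < n → q ^ n ≠ 1) (r : ℕ) : P2 q r = ∑ i ∈ Finset.range (2 * r + 2),
    ((-1 : K) ^ i * qbinom q (2 * r + 1) i) •
      ((C (X : Polynomial (Polynomial K))) ^ i * (X : Polynomial (Polynomial (Polynomial K))) ^ (2 * r + 1 - i)) := by
  have h := qbt hq hroot (2 * r + 1) (Polynomial (Polynomial (Polynomial K))) (C (X : Polynomial (Polynomial K))) X
  rw [← h, P2]
  apply Finset.prod_congr rfl
  intro k _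
  congr 1
  rw [Polynomial.smul_C]
  congr 2
  push_cast
  ring

lemma FF_eq (hq : q ≠ 0) (hroot : ∀ n : ℕ, 0 < n → q ^ n ≠ 1) (r : ℕ) : FF q r = ∑ i ∈ Finset.range (2 * r + 4),
    ((-1 : K) ^ i * qbinom q (2 * r + 3) i) •
      ((C (C (X : Polynomial K))) ^ i * (X : Polynomial (Polynomial (Polynomial K))) ^ (2 * r + 3 - i)) := by
  have h := qbt hq hroot (2 * r + 3) (Polynomial (Polynomial (Polynomial K))) (C (C (X : Polynomial K))) X
  rw [← h, FF]
  apply Finset.prod_congr rfl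
  intro k _
  congr 1
  rw [Polynomial.smul_C, Polynomial.smul_C]
  congr 3
  push_cast
  ring

section Tmaps

variable {A : Type} [Ring A] [Algebra K A] (x y : A)

/-- `T₂ : K[a][m] → A`, `a^α m^β ↦ x^α y x^β`. -/
def T2 (K : Type) [Field K] {A : Type} [Ring A] [Algebra K A] (x y : A) :
    Polynomial (Polynomial K) →+ A :=
  AddMonoidHom.mk' (fun g => g.sum fun β c => Polynomial.aeval x c * (y * x ^ β))
    (fun g g' => by
      apply Polynomial.sum_add_index
      · intro β; simp
      · intro β c c'; rw [map_add, add_mul])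

lemma T2_apply (g : Polynomial (Polynomial K)) :
    T2 K x y g = g.sum fun β c => Polynomial.aeval x c * (y * x ^ β) := rfl

lemma T2_monomial (β : ℕ) (c : Polynomial K) :
    T2 K x y (monomial β c) = Polynomial.aeval x c * (y * x ^ β) := by
  rw [T2_apply, Polynomial.sum_monomial_index]
  simp

lemma T2_smul (k : K) (g : Polynomial (Polynomial K)) :
    T2 K x y (k • g) = k • T2 K x y g := by
  induction g using Polynomial.induction_on' with
  | add g g' hg hg' => rw [smul_add, map_add, map_add, hg, hg', smul_add]
  | monomial β c =>
    rw [Polynomial.smul_monomial, T2_monomial, T2_monomial, map_smul, smul_mul_assoc]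

/-- `T r : K[a][m][b] → A`, `a^α m^β b^γ ↦ x^α y x^β y^r x^γ`. -/
def TT (K : Type) [Field K] {A : Type} [Ring A] [Algebra K A] (x y : A) (r : ℕ) :
    Polynomial (Polynomial (Polynomial K)) →+ A :=
  AddMonoidHom.mk' (fun p => p.sum fun γ c => T2 K x y c * (y ^ r * x ^ γ))
    (fun p p' => by
      apply Polynomial.sum_add_index
      · intro γ; simp
      · intro γ c c'; rw [map_add, add_mul])

lemma TT_apply (r : ℕ) (p : Polynomial (Polynomial (Polynomial K))) :
    TT K x y r p = p.sum fun γ c => T2 K x y c * (y ^ r * x ^ γ) := rfl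

lemma TT_monomial (r : ℕ) (γ : ℕ) (c : Polynomial (Polynomial K)) :
    TT K x y r (monomial γ c) = T2 K x y c * (y ^ r * x ^ γ) := by
  rw [TT_apply, Polynomial.sum_monomial_index]
  simp

lemma TT_smul (r : ℕ) (k : K) (p : Polynomial (Polynomial (Polynomial K))) :
    TT K x y r (k • p) = k • TT K x y r p := by
  induction p using Polynomial.induction_on' with
  | add p p' hp hp' => rw [smul_add, map_add, map_add, hp, hp', smul_add]
  | monomial γ c =>
    rw [Polynomial.smul_monomial, TT_monomial, TT_monomial, T2_smul, smul_mul_assoc]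

/-- The higher-order Serre sum of order `r`. -/
def Gs (q : K) (r : ℕ) : A := ∑ i ∈ Finset.range (2 * r + 2),
  ((-1 : K) ^ i * qbinom q (2 * r + 1) i) • (x ^ i * y ^ r * x ^ (2 * r + 1 - i))

lemma T2_P1_mul (hq : q ≠ 0) (hroot : ∀ n : ℕ, 0 < n → q ^ n ≠ 1) (hs1 : Gs x y q 1 = 0) (c : Polynomial (Polynomial K)) :
    T2 K x y (P1 q * c) = 0 := by
  have hserre : ∑ k ∈ Finset.range 4, ((-1 : K) ^ k * qbinom q 3 k) • (x ^ k * (y * x ^ (3 - k))) = 0 := by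
    rw [← hs1, Gs]
    norm_num
    apply Finset.sum_congr rfl
    intro k _
    congr 1
    rw [mul_assoc]
  induction c using Polynomial.induction_on' with
  | add c c' hc hc' => rw [mul_add, map_add, hc, hc', add_zero]
  | monomial β cβ =>
    rw [P1_eq q hq hroot, Finset.sum_mul, map_sum]
    have hterm : ∀ k ∈ Finset.range 4,
        T2 K x y (((-1 : K) ^ k * qbinom q 3 k) • ((C (X : Polynomial K)) ^ k * (X : Polynomial (Polynomial K)) ^ (3 - k)) * monomial β cβ)
        = Polynomial.aeval x cβ * (((-1 : K) ^ k * qbinom q 3 k) • (x ^ k * (y * x ^ (3 - k)))) * x ^ β := by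
      intro k _
      rw [smul_mul_assoc, ← map_pow (C : Polynomial K →+* Polynomial (Polynomial K)),
        C_mul_X_pow_eq_monomial, monomial_mul_monomial, mul_comm ((X : Polynomial K) ^ k) cβ,
        T2_smul, T2_monomial, map_mul, map_pow, Polynomial.aeval_X]
      rw [mul_smul_comm, smul_mul_assoc]
      congr 1
      rw [pow_add]
      simp only [mul_assoc]
    rw [Finset.sum_congr rfl hterm, ← Finset.sum_mul, ← Finset.mul_sum, hserre, mul_zero, zero_mul]

lemma TT_P1_mul (hq : q ≠ 0) (hroot : ∀ n : ℕ, 0 < n → q ^ n ≠ 1) (r : ℕ) (hs1 : Gs x y q 1 = 0) (p : Polynomial (Polynomial (Polynomial K))) :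
    TT K x y r (C (P1 q) * p) = 0 := by
  induction p using Polynomial.induction_on' with
  | add p p' hp hp' => rw [mul_add, map_add, hp, hp', add_zero]
  | monomial γ c =>
    rw [C_mul_monomial, TT_monomial, T2_P1_mul q x y hq hroot hs1, zero_mul]

lemma TT_P2_mul (hq : q ≠ 0) (hroot : ∀ n : ℕ, 0 < n → q ^ n ≠ 1) (r : ℕ) (hG : Gs x y q r = 0) (p : Polynomial (Polynomial (Polynomial K))) :
    TT K x y r (P2 q r * p) = 0 := by
  induction p using Polynomial.induction_on' with
  | add p p' hp hp' => rw [mul_add, map_add, hp, hp', add_zero]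
  | monomial γ c =>
    induction c using Polynomial.induction_on' with
    | add c c' hc hc' =>
      rw [map_add, mul_add, map_add, hc, hc', add_zero]
    | monomial β cβ =>
      rw [P2_eq q hq hroot, Finset.sum_mul, map_sum]
      have hterm : ∀ i ∈ Finset.range (2 * r + 2),
          TT K x y r (((-1 : K) ^ i * qbinom q (2 * r + 1) i) •
              ((C (X : Polynomial (Polynomial K))) ^ i * (X : Polynomial (Polynomial (Polynomial K))) ^ (2 * r + 1 - i)) * monomial γ (monomial β cβ))
          = Polynomial.aeval x cβ * (y * x ^ β) *
              (((-1 : K) ^ i * qbinom q (2 * r + 1) i) • (x ^ i * y ^ r * x ^ (2 * r + 1 - i))) * x ^ γ := by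
        intro i _
        rw [smul_mul_assoc, ← map_pow (C : Polynomial (Polynomial K) →+* Polynomial (Polynomial (Polynomial K))),
          C_mul_X_pow_eq_monomial, monomial_mul_monomial]
        have hXm : (X : Polynomial (Polynomial K)) ^ i * monomial β cβ = monomial (β + i) cβ := by
          rw [X_pow_mul, monomial_mul_X_pow]
        rw [hXm, TT_smul, TT_monomial, T2_monomial]
        rw [mul_smul_comm, smul_mul_assoc]
        congr 1
        rw [pow_add, pow_add]
        simp only [mul_assoc]
      rw [Finset.sum_congr rfl hterm, ← Finset.sum_mul, ← Finset.mul_sum, ← Gs, hG, mul_zero, zero_mul]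

lemma TT_FF_eq (hq : q ≠ 0) (hroot : ∀ n : ℕ, 0 < n → q ^ n ≠ 1) (r : ℕ) : TT K x y r (FF q r) = Gs x y q (r + 1) := by
  rw [FF_eq q hq hroot, map_sum, Gs]
  have h1 : 2 * (r + 1) + 2 = 2 * r + 4 := by ring
  have h2 : 2 * (r + 1) + 1 = 2 * r + 3 := by ring
  rw [h1, h2]
  apply Finset.sum_congr rfl
  intro i _
  rw [TT_smul]
  congr 1
  have hC2 : (C ((X : Polynomial K) ^ i) : Polynomial (Polynomial K))
      = monomial 0 ((X : Polynomial K) ^ i) := by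
    rw [← C_mul_X_pow_eq_monomial, pow_zero, mul_one]
  have hCC : (C (C (X : Polynomial K)) : Polynomial (Polynomial (Polynomial K))) ^ i
      = C (C ((X : Polynomial K) ^ i)) := by
    simp only [map_pow]
  rw [hCC, C_mul_X_pow_eq_monomial, TT_monomial, hC2, T2_monomial, map_pow, Polynomial.aeval_X,
    pow_zero, mul_one, pow_succ' y r]
  simp only [mul_assoc]

end Tmaps

section Div

variable {q : K} (hq : q ≠ 0) (hroot : ∀ n : ℕ, 0 < n → q ^ n ≠ 1)

include hq hroot

lemma zpow_injq {s t : ℤ} (h : s ≠ t) : (q : K) ^ s ≠ q ^ t := by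
  intro heq
  have hd : q ^ (s - t) = 1 := by
    rw [zpow_sub₀ hq, heq, div_self (zpow_ne_zero t hq)]
  have hd' : q ^ ((s - t).natAbs : ℕ) = 1 := by
    rcases Int.natAbs_eq (s - t) with h' | h'
    · rw [← zpow_natCast q, ← h', hd]
    · have : q ^ (-((s - t).natAbs : ℤ)) = 1 := by rw [← h', hd]
      rw [zpow_neg] at this
      rw [← zpow_natCast q]
      exact inv_eq_one.mp this
  exact hroot _ (by omega) hd'

omit hq hroot in
/-- evaluation point for `m ↦ q^{2k-2} a`. -/
def ptk (q : K) (k : ℕ) : Polynomial K := (q ^ (2 * (k : ℤ) - 2)) • X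

omit hq hroot in
lemma P1_factored : P1 q
    = (X - C (ptk q 0)) * (X - C (ptk q 1)) * (X - C (ptk q 2)) := by
  rw [P1, Finset.prod_range_succ, Finset.prod_range_succ, Finset.prod_range_one]
  rfl

lemma ptk_ne {j k : ℕ} (h : j ≠ k) : ptk q j ≠ ptk q k := by
  intro heq
  apply zpow_injq hq hroot (show 2 * (j : ℤ) - 2 ≠ 2 * (k : ℤ) - 2 by omega)
  have hX : (X : Polynomial K) ≠ 0 := Polynomial.X_ne_zero
  have := sub_eq_zero.mpr heq
  rw [ptk, ptk, ← sub_smul] at this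
  rcases smul_eq_zero.mp this with h' | h'
  · exact sub_eq_zero.mp h'
  · exact absurd h' hX

lemma P1_dvd_of_roots (g : Polynomial (Polynomial K))
    (h0 : g.eval (ptk q 0) = 0) (h1 : g.eval (ptk q 1) = 0) (h2 : g.eval (ptk q 2) = 0) :
    P1 q ∣ g := by
  obtain ⟨g1, hg1⟩ := Polynomial.dvd_iff_isRoot.mpr h0
  have e1 : g1.eval (ptk q 1) = 0 := by
    rw [hg1, Polynomial.eval_mul, Polynomial.eval_sub, Polynomial.eval_X, Polynomial.eval_C] at h1
    rcases mul_eq_zero.mp h1 with h' | h'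
    · exact absurd (sub_eq_zero.mp h') (ptk_ne hq hroot (by norm_num))
    · exact h'
  obtain ⟨g2, hg2⟩ := Polynomial.dvd_iff_isRoot.mpr e1
  have e2 : g2.eval (ptk q 2) = 0 := by
    rw [hg1, hg2, Polynomial.eval_mul, Polynomial.eval_mul, Polynomial.eval_sub,
      Polynomial.eval_sub, Polynomial.eval_X, Polynomial.eval_C, Polynomial.eval_C] at h2
    rcases mul_eq_zero.mp h2 with h' | h'
    · exact absurd (sub_eq_zero.mp h') (ptk_ne hq hroot (by norm_num))
    rcases mul_eq_zero.mp h' with h'' | h''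
    · exact absurd (sub_eq_zero.mp h'') (ptk_ne hq hroot (by norm_num))
    exact h''
  obtain ⟨g3, hg3⟩ := Polynomial.dvd_iff_isRoot.mpr e2
  refine ⟨g3, ?_⟩
  rw [P1_factored, hg1, hg2, hg3]
  ring

omit hq hroot in
/-- the linear factors at the `B`-level. -/
def hB (q : K) (r : ℕ) (i : ℕ) : Polynomial (Polynomial K) :=
  X - C ((q ^ (2 * (i : ℤ) - 2 * (r : ℤ) - 2)) • (X : Polynomial K))

omit hroot in
lemma map_FF (r k : ℕ) :
    (FF q r).map (evalRingHom (ptk q k)) = ∏ i ∈ Finset.range (2 * r + 3), hB q r i := by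
  rw [FF, ← coe_mapRingHom, map_prod]
  apply Finset.prod_congr rfl
  intro i _
  rw [coe_mapRingHom, Polynomial.map_sub, Polynomial.map_X, Polynomial.map_C]
  simp only [coe_evalRingHom, eval_C]
  rw [hB]

omit hroot in
lemma map_P2 (r k : ℕ) :
    (P2 q r).map (evalRingHom (ptk q k)) = ∏ i ∈ Finset.range (2 * r + 1), hB q r (i + k) := by
  rw [P2, ← coe_mapRingHom, map_prod]
  apply Finset.prod_congr rfl
  intro i _
  rw [coe_mapRingHom, Polynomial.map_sub, Polynomial.map_X, Polynomial.map_C]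
  simp only [coe_evalRingHom]
  rw [eval_smul, eval_X, hB, ptk, smul_smul, ← zpow_add₀ hq]
  congr 3
  push_cast
  ring

omit hq hroot in
lemma hB_monic (r i : ℕ) : (hB q r i).Monic := monic_X_sub_C _

omit hq hroot in
lemma P2_monic (r : ℕ) : (P2 q r).Monic :=
  monic_prod_of_monic _ _ (fun i _ => monic_X_sub_C _)

omit hroot in
lemma map_P2_dvd (r : ℕ) : ∀ k ≤ 2,
    (P2 q r).map (evalRingHom (ptk q k)) ∣ (FF q r).map (evalRingHom (ptk q k)) := by
  intro k hk
  rw [map_FF hq, map_P2 hq]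
  interval_cases k
  · refine ⟨hB q r (2 * r + 1) * hB q r (2 * r + 2), ?_⟩
    rw [show 2 * r + 3 = (2 * r + 2) + 1 from rfl, Finset.prod_range_succ,
      show 2 * r + 2 = (2 * r + 1) + 1 from rfl, Finset.prod_range_succ]
    simp [mul_assoc]
  · refine ⟨hB q r 0 * hB q r (2 * r + 2), ?_⟩
    rw [show 2 * r + 3 = (2 * r + 2) + 1 from rfl, Finset.prod_range_succ,
      Finset.prod_range_succ']
    ring
  · refine ⟨hB q r 1 * hB q r 0, ?_⟩
    rw [show 2 * r + 3 = (2 * r + 2) + 1 from rfl, Finset.prod_range_succ',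
      Finset.prod_range_succ' (fun i => hB q r (i + 1)) (2 * r + 1)]
    have : ∀ i ∈ Finset.range (2 * r + 1), hB q r (i + 1 + 1) = hB q r (i + 2) := by
      intro i _; norm_num
    rw [Finset.prod_congr rfl this]
    ring

lemma key_decomp (r : ℕ) : ∃ V W, FF q r = P2 q r * V + C (P1 q) * W := by
  have hmod : ∀ k ≤ 2, ((FF q r) %ₘ (P2 q r)).map (evalRingHom (ptk q k)) = 0 := by
    intro k hk
    rw [Polynomial.map_modByMonic _ (P2_monic (q := q) r)]
    have hmonic : ((P2 q r).map (evalRingHom (ptk q k))).Monic := by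
      rw [map_P2 hq]
      exact monic_prod_of_monic _ _ (fun i _ => hB_monic r _)
    exact (Polynomial.modByMonic_eq_zero_iff_dvd hmonic).mpr (map_P2_dvd hq r k hk)
  have hcoeff : ∀ n, P1 q ∣ ((FF q r) %ₘ (P2 q r)).coeff n := by
    intro n
    have hev : ∀ k, k ≤ 2 → Polynomial.eval (ptk q k) (((FF q r) %ₘ (P2 q r)).coeff n) = 0 := by
      intro k hk
      have hc : (((FF q r) %ₘ (P2 q r)).map (evalRingHom (ptk q k))).coeff n
          = evalRingHom (ptk q k) (((FF q r) %ₘ (P2 q r)).coeff n) :=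
        Polynomial.coeff_map _ n
      rw [hmod k hk] at hc
      simpa [coe_evalRingHom] using hc.symm
    exact P1_dvd_of_roots hq hroot _ (hev 0 (by norm_num)) (hev 1 (by norm_num))
      (hev 2 (by norm_num))
  obtain ⟨W, hW⟩ := (Polynomial.C_dvd_iff_dvd_coeff (P1 q) _).mpr hcoeff
  refine ⟨FF q r /ₘ P2 q r, W, ?_⟩
  rw [← hW]
  have h := Polynomial.modByMonic_add_div (FF q r) (P2 q r)
  rw [add_comm]
  exact h.symm

end Div

end Main

section Final

variable {K : Type} [Field K] {q : K} (hq : q ≠ 0) (hroot : ∀ n : ℕ, 0 < n → q ^ n ≠ 1)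

include hq hroot

lemma qfact_one : qfact q 1 = 1 := by
  rw [show qfact q 1 = qnum q 1 * qfact q 0 from rfl, qnum_one hq hroot]
  simp [qfact]

lemma qbinom_31 : qbinom q 3 1 = qnum q 3 := by
  rw [qbinom, show (3 : ℕ) - 1 = 2 from rfl, qfact_one hq hroot, one_mul,
    show qfact q 3 = qnum q 3 * qfact q 2 from rfl, mul_div_assoc,
    div_self (qfact_ne hq hroot 2), mul_one]

lemma qbinom_32 : qbinom q 3 2 = qnum q 3 := by
  rw [qbinom, show (3 : ℕ) - 2 = 1 from rfl, qfact_one hq hroot, mul_one,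
    show qfact q 3 = qnum q 3 * qfact q 2 from rfl, mul_div_assoc,
    div_self (qfact_ne hq hroot 2), mul_one]

end Final

end S2

/-- the higher order `q`-Serre relations hold in `𝒜`:
`∑_{i=0}^{2r+1} (−1)^i [2r+1 choose i] x^i y^r x^{2r+1−i} = 0` for every positive `r`. -/
theorem stmt2 (K : Type) [Field K] [IsAlgClosed K] [CharZero K]
    (q : K) (hq : q ≠ 0) (hroot : ∀ n : ℕ, 0 < n → q ^ n ≠ 1)
    (r : ℕ) (hr : 0 < r) :
    ∑ i ∈ Finset.range (2 * r + 2),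
      ((-1 : K) ^ i * qbinom q (2 * r + 1) i) •
        (Xq K q ^ i * Yq K q ^ r * Xq K q ^ (2 * r + 1 - i)) = 0 := by
  have hrel : Xq K q ^ 3 * Yq K q - qthree q • (Xq K q ^ 2 * Yq K q * Xq K q)
      + qthree q • (Xq K q * Yq K q * Xq K q ^ 2) - Yq K q * Xq K q ^ 3 = 0 := by
    have h := RingQuot.mkAlgHom_rel K (QSerreRel.xrel (K := K) (q := q))
    simp only [map_sub, map_add, map_smul, map_mul, map_pow, map_zero] at h
    exact h
  have hs1 : S2.Gs (Xq K q) (Yq K q) q 1 = 0 := by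
    show ∑ i ∈ Finset.range (2 * 1 + 2),
      ((-1 : K) ^ i * qbinom q (2 * 1 + 1) i) •
        (Xq K q ^ i * Yq K q ^ 1 * Xq K q ^ (2 * 1 + 1 - i)) = 0
    norm_num
    rw [Finset.sum_range_succ, Finset.sum_range_succ, Finset.sum_range_succ,
      Finset.sum_range_one]
    rw [S2.qbinom_zero hq hroot, S2.qbinom_31 hq hroot, S2.qbinom_32 hq hroot,
      S2.qbinom_self hq hroot]
    have hq3 : qnum q 3 = qthree q := rfl
    rw [hq3]
    simp only [pow_zero, pow_one, one_mul, mul_one, one_smul, neg_smul, neg_one_mul]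
    simp only [pow_succ, pow_zero, one_mul, mul_one, mul_assoc] at hrel ⊢
    simp only [Nat.sub_self, pow_zero, mul_one]
    linear_combination (norm := module) -hrel
  have base : S2.Gs (Xq K q) (Yq K q) q 0 = 0 := by
    show ∑ i ∈ Finset.range (2 * 0 + 2),
      ((-1 : K) ^ i * qbinom q (2 * 0 + 1) i) •
        (Xq K q ^ i * Yq K q ^ 0 * Xq K q ^ (2 * 0 + 1 - i)) = 0
    norm_num [Finset.sum_range_succ, S2.qbinom_zero hq hroot, S2.qbinom_self hq hroot]
    module
  have main : ∀ n, S2.Gs (Xq K q) (Yq K q) q n = 0 := by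
    intro n
    induction n with
    | zero => exact base
    | succ m ih =>
      obtain ⟨V, W, hVW⟩ := S2.key_decomp hq hroot m
      rw [← S2.TT_FF_eq q (Xq K q) (Yq K q) hq hroot m, hVW, map_add,
        S2.TT_P2_mul q (Xq K q) (Yq K q) hq hroot m ih V,
        S2.TT_P1_mul q (Xq K q) (Yq K q) hq hroot m hs1 W, add_zero]
  exact main r
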